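/- arXiv:2212.12277 — 2 statements merged into one kernel-verified Lean document; each statement's English description precedes it below -/
import Mathlib

section
/- For every real r ≥ 0 and every n ∈ ℕ with n ≥ 1, the sequence (⌈n,k⌉_r)_{k=0}^n of r-Stirling numbers of the first kind is strictly log-concave: for every k ∈ {1,...,n-1} one has ⌈n,k⌉_r² > ⌈n,k+1⌉_r · ⌈n,k-1⌉_r. -/
open Finset Filter MeasureTheory

/-- r-Stirling numbers of the first kind. -/
noncomputable def stirFir (r : ℝ) : ℕ → ℕ → ℝ
  | 0, 0 => 1
  | 0, _ + 1 => 0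
  | n + 1, 0 => ((n : ℝ) + r) * stirFir r n 0
  | n + 1, k + 1 => ((n : ℝ) + r) * stirFir r n (k + 1) + stirFir r n k

/-- r-Stirling numbers of the second kind. -/
noncomputable def stirSec (r : ℝ) : ℕ → ℕ → ℝ
  | 0, 0 => 1
  | 0, _ + 1 => 0
  | n + 1, 0 => r * stirSec r n 0
  | n + 1, k + 1 => ((k : ℝ) + 1 + r) * stirSec r n (k + 1) + stirSec r n k

/-- The r-Lah number L(n,k)_r. -/
noncomputable def lahNum (r : ℝ) (n k : ℕ) : ℝ :=
  ∑ j ∈ Finset.Icc k n, stirFir r n j * stirSec r j k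

/-- The probability mass function of the r-Lah distribution. -/
noncomputable def lahPMF (r : ℝ) (n k j : ℕ) : ℝ :=
  stirFir r n j * stirSec r j k / lahNum r n k

/-- The expectation of the r-Lah distribution. -/
noncomputable def lahExp (r : ℝ) (n k : ℕ) : ℝ :=
  (∑ j ∈ Finset.Icc k n, (j : ℝ) * stirFir r n j * stirSec r j k) / lahNum r n k

lemma stirFir_nonneg (r : ℝ) (hr : 0 ≤ r) : ∀ n k, 0 ≤ stirFir r n k := by
  intro n
  induction n with
  | zero => intro k; cases k <;> simp [stirFir]
  | succ m ih =>
    intro k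
    have hm : (0:ℝ) ≤ (m:ℝ) + r := by
      have := Nat.cast_nonneg (α := ℝ) m; linarith
    cases k with
    | zero =>
      simpa [stirFir] using mul_nonneg hm (ih 0)
    | succ k =>
      simp only [stirFir]
      exact add_nonneg (mul_nonneg hm (ih (k+1))) (ih k)

lemma stirFir_eq_zero (r : ℝ) : ∀ n k, n < k → stirFir r n k = 0 := by
  intro n
  induction n with
  | zero =>
    intro k hk
    obtain ⟨k', rfl⟩ : ∃ k', k = k' + 1 := ⟨k - 1, by omega⟩
    simp [stirFir]
  | succ m ih =>
    intro k hk
    obtain ⟨k', rfl⟩ : ∃ k', k = k' + 1 := ⟨k - 1, by omega⟩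
    simp only [stirFir]
    rw [ih (k' + 1) (by omega), ih k' (by omega)]
    ring

lemma stirFir_pos (r : ℝ) (hr : 0 ≤ r) : ∀ n k, 1 ≤ k → k ≤ n → 0 < stirFir r n k := by
  intro n
  induction n with
  | zero => intro k h1 h2; omega
  | succ m ih =>
    intro k h1 h2
    have hm : (0:ℝ) ≤ (m:ℝ) + r := by
      have := Nat.cast_nonneg (α := ℝ) m; linarith
    obtain ⟨k', rfl⟩ : ∃ k', k = k' + 1 := ⟨k - 1, by omega⟩
    simp only [stirFir]
    cases k' with
    | zero =>
      cases m with
      | zero => simp [stirFir]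
      | succ m' =>
        have h1 := ih 1 le_rfl (by omega)
        have h2 := stirFir_nonneg r hr (m' + 1) 0
        have hm' : (0:ℝ) < ((m' + 1 : ℕ):ℝ) + r := by
          push_cast; linarith
        nlinarith
    | succ k'' =>
      have hpos := ih (k'' + 1) (by omega) (by omega)
      have hnn := stirFir_nonneg r hr m (k'' + 2)
      nlinarith

lemma stirFir_log_concave (r : ℝ) (hr : 0 ≤ r) :
    ∀ n j, j + 2 ≤ n →
      stirFir r n (j + 2) * stirFir r n j < (stirFir r n (j + 1)) ^ 2 := by
  intro n
  induction n with
  | zero => intro j hj; omega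
  | succ m ih =>
    intro j hj
    have hm1 : 1 ≤ m := by omega
    have ha : (1:ℝ) ≤ (m:ℝ) + r := by
      have : (1:ℝ) ≤ (m:ℝ) := by exact_mod_cast hm1
      linarith
    have ha0 : (0:ℝ) < (m:ℝ) + r := by linarith
    -- strict log-concavity one level down (with the convention for out-of-range)
    have t1 : stirFir r m (j + 2) * stirFir r m j < (stirFir r m (j + 1)) ^ 2 := by
      by_cases h : j + 2 ≤ m
      · exact ih j h
      · have hA : stirFir r m (j + 2) = 0 := stirFir_eq_zero r m (j + 2) (by omega)
        have hB : 0 < stirFir r m (j + 1) := stirFir_pos r hr m (j + 1) (by omega) (by omega)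
        rw [hA, zero_mul]
        positivity
    cases j with
    | zero =>
      set A := stirFir r m 2 with hA
      set B := stirFir r m 1 with hB
      set C := stirFir r m 0 with hC
      have hBpos : 0 < B := stirFir_pos r hr m 1 le_rfl (by omega)
      have hAnn : 0 ≤ A := stirFir_nonneg r hr m 2
      have hCnn : 0 ≤ C := stirFir_nonneg r hr m 0
      show (((m:ℝ) + r) * A + B) * (((m:ℝ) + r) * C) < (((m:ℝ) + r) * B + C) ^ 2
      nlinarith [mul_pos (mul_pos ha0 ha0) (sub_pos.2 t1),
        mul_nonneg (mul_nonneg ha0.le hBpos.le) hCnn, sq_nonneg C]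
    | succ j' =>
      set A := stirFir r m (j' + 3) with hA
      set B := stirFir r m (j' + 2) with hB
      set C := stirFir r m (j' + 1) with hC
      set D := stirFir r m j' with hD
      have t3 : B * D < C ^ 2 := ih j' (by omega)
      have hBpos : 0 < B := stirFir_pos r hr m (j' + 2) (by omega) (by omega)
      have hCpos : 0 < C := stirFir_pos r hr m (j' + 1) (by omega) (by omega)
      have hAnn : 0 ≤ A := stirFir_nonneg r hr m (j' + 3)
      have hDnn : 0 ≤ D := stirFir_nonneg r hr m j'
      have T2 : A * D ≤ B * C := by
        nlinarith [mul_le_mul t1.le t3.le (mul_nonneg hBpos.le hDnn)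
          (sq_nonneg B), mul_pos hBpos hCpos]
      show (((m:ℝ) + r) * A + B) * (((m:ℝ) + r) * C + D) < (((m:ℝ) + r) * B + C) ^ 2
      nlinarith [mul_pos (mul_pos ha0 ha0) (sub_pos.2 t1),
        mul_nonneg ha0.le (sub_nonneg.2 T2)]

theorem stirFir_strict_log_concave (r : ℝ) (hr : 0 ≤ r) (n : ℕ) (hn : 1 ≤ n)
    (k : ℕ) (hk1 : 1 ≤ k) (hk2 : k + 1 ≤ n) :
    stirFir r n (k + 1) * stirFir r n (k - 1) < (stirFir r n k) ^ 2 := by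
  obtain ⟨j, rfl⟩ : ∃ j, k = j + 1 := ⟨k - 1, by omega⟩
  simpa using stirFir_log_concave r hr n j (by omega)
end

section
/- For every real r > 0 and every n ∈ ℕ with n ≥ 1, every complex root of the polynomial B_{n,r}(x) = Σ_{j=0}^n ⦃n,j⦄_r · x^j is a real negative number. (In particular, B_{n,r} has n real negative roots counted with multiplicity.) -/
open Finset Filter MeasureTheory

open Polynomial Set Topology Real

lemma stirSec_zero_of_lt (r : ℝ) : ∀ n k : ℕ, n < k → stirSec r n k = 0
  | 0, k + 1, _ => by simp [stirSec]
  | n + 1, k + 1, h => by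
    rw [stirSec, stirSec_zero_of_lt r n (k + 1) (by omega),
      stirSec_zero_of_lt r n k (by omega)]
    ring

lemma stirSec_diag (r : ℝ) : ∀ n : ℕ, stirSec r n n = 1
  | 0 => by simp [stirSec]
  | n + 1 => by
    rw [stirSec, stirSec_zero_of_lt r n (n + 1) (by omega), stirSec_diag r n]
    ring

noncomputable def PB (r : ℝ) (n : ℕ) : ℝ[X] :=
  ∑ j ∈ Finset.range (n + 1), C (stirSec r n j) * X ^ j

lemma PB_coeff (r : ℝ) (n k : ℕ) : (PB r n).coeff k = stirSec r n k := by
  rw [PB, finset_sum_coeff]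
  simp only [coeff_C_mul, coeff_X_pow, mul_ite, mul_one, mul_zero]
  rw [Finset.sum_ite_eq (Finset.range (n + 1)) k fun j => stirSec r n j]
  split_ifs with h
  · rfl
  · rw [stirSec_zero_of_lt r n k (by simpa using h)]

lemma PB_natDegree (r : ℝ) (n : ℕ) : (PB r n).natDegree = n := by
  have h1 : (PB r n).natDegree ≤ n := by
    refine natDegree_le_iff_coeff_eq_zero.2 fun N hN => ?_
    rw [PB_coeff, stirSec_zero_of_lt r n N hN]
  have h2 : n ≤ (PB r n).natDegree :=
    le_natDegree_of_ne_zero (by rw [PB_coeff, stirSec_diag]; norm_num)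
  omega

lemma PB_monic (r : ℝ) (n : ℕ) : (PB r n).Monic := by
  unfold Polynomial.Monic Polynomial.leadingCoeff
  rw [PB_natDegree, PB_coeff, stirSec_diag]

lemma PB_succ (r : ℝ) (n : ℕ) :
    PB r (n + 1) = X * derivative (PB r n) + (X + C r) * PB r n := by
  ext k
  cases k with
  | zero =>
    simp [PB_coeff, mul_coeff_zero, coeff_add, stirSec]
  | succ k =>
    simp only [coeff_add, coeff_X_mul, coeff_derivative, add_mul, coeff_C_mul, PB_coeff]
    rw [show stirSec r (n+1) (k+1) = ((k : ℝ) + 1 + r) * stirSec r n (k + 1) + stirSec r n k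
      by rw [stirSec]]
    push_cast
    ring

noncomputable def gg (r : ℝ) (P : ℝ[X]) (x : ℝ) : ℝ := (-x) ^ r * (Real.exp x * P.eval x)

lemma gg_hasDerivAt {r : ℝ} (hr : 0 < r) {x : ℝ} (hx : x < 0) (P : ℝ[X]) :
    HasDerivAt (gg r P)
      (-((-x) ^ (r - 1) *
        (Real.exp x * (X * derivative P + (X + C r) * P).eval x))) x := by
  have hxpos : (0:ℝ) < -x := by linarith
  have h1 : HasDerivAt (fun y : ℝ => (-y) ^ r) (r * (-x) ^ (r - 1) * (-1)) x := by
    have h0 : HasDerivAt (fun y : ℝ => y ^ r) (r * (-x) ^ (r - 1)) (-x) :=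
      Real.hasDerivAt_rpow_const (Or.inl hxpos.ne')
    have := h0.comp x (hasDerivAt_neg x)
    simpa [Function.comp_def] using this
  have h2 : HasDerivAt (fun y : ℝ => Real.exp y * P.eval y)
      (Real.exp x * P.eval x + Real.exp x * (derivative P).eval x) x :=
    (Real.hasDerivAt_exp x).mul (P.hasDerivAt x)
  have h3 := h1.mul h2
  have key : (-x) ^ r = (-x) ^ (r - 1) * (-x) := by
    rw [show r = r - 1 + 1 by ring, Real.rpow_add hxpos, Real.rpow_one]
    ring_nf
  have h4 : HasDerivAt (gg r P)
      (r * (-x) ^ (r - 1) * (-1) * (Real.exp x * P.eval x) +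
        (-x) ^ r * (Real.exp x * P.eval x + Real.exp x * (derivative P).eval x)) x := h3
  convert h4 using 1
  rw [key]
  simp only [eval_add, eval_mul, eval_X, eval_C]
  ring

lemma Q_root_of_deriv {r : ℝ} (hr : 0 < r) {x : ℝ} (hx : x < 0) (P : ℝ[X])
    (h : deriv (gg r P) x = 0) : (X * derivative P + (X + C r) * P).eval x = 0 := by
  have hd := (gg_hasDerivAt hr hx P).deriv
  rw [hd] at h
  have h1 : ((-x : ℝ) ^ (r - 1)) ≠ 0 := (Real.rpow_pos_of_pos (by linarith) _).ne'
  have h2 := Real.exp_ne_zero x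
  simp only [neg_eq_zero, mul_eq_zero] at h
  tauto

lemma gg_tendsto_zero {r : ℝ} (hr : 0 < r) (P : ℝ[X]) :
    Tendsto (gg r P) (𝓝[<] (0:ℝ)) (𝓝 0) := by
  have h1 : Tendsto (fun x : ℝ => (-x) ^ r) (𝓝 (0:ℝ)) (𝓝 0) := by
    have hc : ContinuousAt (fun y : ℝ => y ^ r) 0 :=
      Real.continuousAt_rpow_const 0 r (Or.inr hr.le)
    have hn : Tendsto (fun x : ℝ => -x) (𝓝 (0:ℝ)) (𝓝 (0:ℝ)) := by
      simpa using (continuous_neg.tendsto (0:ℝ))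
    have := hc.tendsto.comp hn
    simpa [Function.comp_def, Real.zero_rpow hr.ne'] using this
  have h2 : Tendsto (fun x : ℝ => Real.exp x * P.eval x) (𝓝 (0:ℝ))
      (𝓝 (Real.exp 0 * P.eval 0)) :=
    ((Real.continuous_exp.mul P.continuous_aeval).continuousAt).tendsto
  have := (h1.mul h2).mono_left (nhdsWithin_le_nhds (s := Iio (0:ℝ)))
  show Tendsto (fun x : ℝ => (-x) ^ r * (Real.exp x * P.eval x)) _ _
  simpa [gg] using this

lemma gg_tendsto_atBot {r : ℝ} (hr : 0 < r) (P : ℝ[X]) :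
    Tendsto (gg r P) atBot (𝓝 0) := by
  have key : Tendsto (fun y : ℝ => gg r P (-y)) atTop (𝓝 0) := by
    have hterm : ∀ j : ℕ, Tendsto
        (fun y : ℝ => P.coeff j * (-1:ℝ) ^ j * (y ^ (r + j) * Real.exp (-y)))
        atTop (𝓝 0) := by
      intro j
      have h := tendsto_rpow_mul_exp_neg_mul_atTop_nhds_zero (r + j) 1 one_pos
      have h2 := h.const_mul (P.coeff j * (-1:ℝ) ^ j)
      simpa using h2
    have hsum := tendsto_finset_sum (Finset.range (P.natDegree + 1))
      (fun j _ => hterm j)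
    rw [Finset.sum_const_zero] at hsum
    refine Tendsto.congr' ?_ hsum
    filter_upwards [eventually_gt_atTop (0:ℝ)] with y hy
    unfold gg
    rw [neg_neg, Polynomial.eval_eq_sum_range, Finset.mul_sum, Finset.mul_sum]
    refine Finset.sum_congr rfl fun j _ => ?_
    rw [Real.rpow_add hy, Real.rpow_natCast, neg_pow]
    ring
  have h5 : Tendsto (fun x : ℝ => gg r P (-(-x))) atBot (𝓝 0) :=
    key.comp tendsto_neg_atBot_atTop
  simpa using h5

lemma gg_eq_zero {r : ℝ} {P : ℝ[X]} {x : ℝ} (h : P.eval x = 0) : gg r P x = 0 := by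
  simp [gg, h]

lemma gg_ne_zero {r : ℝ} {P : ℝ[X]} {x : ℝ} (hx : x < 0) (h : P.eval x ≠ 0) :
    gg r P x ≠ 0 := by
  have : ((-x:ℝ) ^ r) ≠ 0 := (Real.rpow_pos_of_pos (by linarith) _).ne'
  simp [gg, this, Real.exp_ne_zero, h]

lemma gg_tendsto_of_root {r : ℝ} (hr : 0 < r) {P : ℝ[X]} {a : ℝ} (ha : a < 0)
    (hroot : P.eval a = 0) : Tendsto (gg r P) (𝓝 a) (𝓝 0) := by
  have := ((gg_hasDerivAt hr ha P).differentiableAt).continuousAt.tendsto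
  rwa [gg_eq_zero hroot] at this

lemma exists_Qroot {r : ℝ} (hr : 0 < r) (P : ℝ[X]) {a b : ℝ} (hab : a < b) (hb : b ≤ 0)
    (hfa : Tendsto (gg r P) (𝓝[>] a) (𝓝 0)) (hfb : Tendsto (gg r P) (𝓝[<] b) (𝓝 0)) :
    ∃ c ∈ Ioo a b, (X * derivative P + (X + C r) * P).eval c = 0 := by
  obtain ⟨c, hc, hc0⟩ := exists_deriv_eq_zero' hab hfa hfb
  exact ⟨c, hc, Q_root_of_deriv hr (lt_of_lt_of_le hc.2 hb) P hc0⟩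

lemma inner_max {g : ℝ → ℝ} {x0 b : ℝ} (hx0b : x0 < b) (hb : b < 0)
    (hdiff : ∀ x < (0:ℝ), DifferentiableAt ℝ g x)
    (hbot : Tendsto g atBot (𝓝 0)) (hgb : g b = 0) (hpos : 0 < g x0) :
    ∃ c < b, deriv g c = 0 := by
  obtain ⟨a, ha⟩ := eventually_atBot.mp (hbot.eventually_lt_const hpos)
  set a' := min a (x0 - 1) with ha'
  have ha'x0 : a' < x0 := lt_of_le_of_lt (min_le_right _ _) (by linarith)
  have ha'b : a' ≤ b := by linarith
  have hcont : ContinuousOn g (Icc a' b) := fun x hx =>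
    ((hdiff x (lt_of_le_of_lt hx.2 hb)).continuousAt).continuousWithinAt
  obtain ⟨c, hc, hmax⟩ := isCompact_Icc.exists_isMaxOn (nonempty_Icc.2 ha'b) hcont
  rw [isMaxOn_iff] at hmax
  have hcx0 : g x0 ≤ g c := hmax x0 ⟨ha'x0.le, hx0b.le⟩
  have hca' : c ≠ a' := by
    rintro rfl
    have := ha a' (min_le_left _ _)
    linarith
  have hcb : c ≠ b := by
    rintro rfl
    rw [hgb] at hcx0
    linarith
  have hcIoo : c ∈ Ioo a' b := ⟨lt_of_le_of_ne hc.1 (Ne.symm hca'), lt_of_le_of_ne hc.2 hcb⟩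
  have hloc : IsLocalMax g c := (isMaxOn_iff.mpr hmax).isLocalMax (Icc_mem_nhds hcIoo.1 hcIoo.2)
  exact ⟨c, hcIoo.2, hloc.deriv_eq_zero⟩

lemma exists_Qroot_bot {r : ℝ} (hr : 0 < r) (P : ℝ[X]) (hP : P ≠ 0) {b : ℝ}
    (hb : b < 0) (hgb : P.eval b = 0) :
    ∃ c < b, (X * derivative P + (X + C r) * P).eval c = 0 := by
  obtain ⟨x0, hx0b, hx0⟩ : ∃ x0 < b, P.eval x0 ≠ 0 := by
    have hfin := Polynomial.finite_setOf_isRoot hP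
    obtain ⟨x0, hx0⟩ := ((Set.Iio_infinite b).diff hfin).nonempty
    exact ⟨x0, hx0.1, hx0.2⟩
  have hx00 : x0 < 0 := hx0b.trans hb
  have hdiff : ∀ x < (0:ℝ), DifferentiableAt ℝ (gg r P) x := fun x hx =>
    (gg_hasDerivAt hr hx P).differentiableAt
  have hbot : Tendsto (gg r P) atBot (𝓝 0) := gg_tendsto_atBot hr P
  have hgb' : gg r P b = 0 := gg_eq_zero hgb
  have hgx0 : gg r P x0 ≠ 0 := gg_ne_zero hx00 hx0
  rcases hgx0.lt_or_gt with hneg | hpos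
  · obtain ⟨c, hcb, hc0⟩ := inner_max (g := fun x => -gg r P x) hx0b hb
      (fun x hx => (hdiff x hx).neg) (by simpa using hbot.neg) (by simp [hgb'])
      (by simpa using hneg)
    refine ⟨c, hcb, Q_root_of_deriv hr (hcb.trans hb) P ?_⟩
    have : deriv (fun x => -gg r P x) c = -deriv (gg r P) c := deriv.neg
    rw [this] at hc0
    linarith
  · obtain ⟨c, hcb, hc0⟩ := inner_max hx0b hb hdiff hbot hgb' hpos
    exact ⟨c, hcb, Q_root_of_deriv hr (hcb.trans hb) P hc0⟩

lemma step_lemma {r : ℝ} (hr : 0 < r) (P : ℝ[X]) (hP : P ≠ 0) {n : ℕ} (hn : 0 < n)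
    (f : Fin n → ℝ) (hmono : StrictMono f) (hneg : ∀ i, f i < 0)
    (hroot : ∀ i, P.eval (f i) = 0) :
    ∃ F : Fin (n + 1) → ℝ, StrictMono F ∧ (∀ i, F i < 0) ∧
      ∀ i, (X * derivative P + (X + C r) * P).eval (F i) = 0 := by
  have hu : ∀ i : Fin n, ∃ c, f i < c ∧
      c < (if h : (i : ℕ) + 1 < n then f ⟨(i : ℕ) + 1, h⟩ else 0) ∧
      (X * derivative P + (X + C r) * P).eval c = 0 := by
    intro i
    set b := if h : (i : ℕ) + 1 < n then f ⟨(i : ℕ) + 1, h⟩ else 0 with hbdef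
    have hb0 : b ≤ 0 := by
      rw [hbdef]; split_ifs with h
      · exact (hneg _).le
      · exact le_refl _
    have hfib : f i < b := by
      rw [hbdef]; split_ifs with h
      · exact hmono (by simp [Fin.lt_def])
      · exact hneg i
    have hta : Tendsto (gg r P) (𝓝[>] (f i)) (𝓝 0) :=
      (gg_tendsto_of_root hr (hneg i) (hroot i)).mono_left nhdsWithin_le_nhds
    have htb : Tendsto (gg r P) (𝓝[<] b) (𝓝 0) := by
      rw [hbdef]; split_ifs with h
      · exact (gg_tendsto_of_root hr (hneg _) (hroot _)).mono_left nhdsWithin_le_nhds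
      · exact gg_tendsto_zero hr P
    obtain ⟨cc, hc, hcr⟩ := exists_Qroot hr P hfib hb0 hta htb
    exact ⟨cc, hc.1, hc.2, hcr⟩
  choose c hc1 hc2 hc3 using hu
  obtain ⟨c0, hc0, hc0root⟩ := exists_Qroot_bot hr P hP (hneg ⟨0, hn⟩) (hroot ⟨0, hn⟩)
  have key1 : ∀ i : Fin n, c i < 0 := by
    intro i
    refine lt_of_lt_of_le (hc2 i) ?_
    split_ifs with h
    · exact (hneg _).le
    · exact le_refl _
  have key2 : ∀ i j : Fin n, i < j → c i < c j := by
    intro i j hij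
    have h1 : (i : ℕ) + 1 < n := by
      have := j.isLt
      have := Fin.lt_def.mp hij
      omega
    have h2 : c i < f ⟨(i : ℕ) + 1, h1⟩ := by
      have := hc2 i
      rwa [dif_pos h1] at this
    have h3 : f ⟨(i : ℕ) + 1, h1⟩ ≤ f j := by
      refine hmono.monotone ?_
      rw [Fin.le_def]
      have := Fin.lt_def.mp hij
      simpa using this
    exact lt_of_lt_of_le h2 (le_trans h3 (hc1 j).le)
  have key3 : ∀ i : Fin n, c0 < c i := by
    intro i
    have h1 : f ⟨0, hn⟩ ≤ f i := hmono.monotone (by rw [Fin.le_def]; simp)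
    exact lt_of_lt_of_le hc0 (le_trans h1 (hc1 i).le)
  refine ⟨Fin.cases c0 c, ?_, ?_, ?_⟩
  · intro i j hij
    rcases Fin.eq_zero_or_eq_succ i with rfl | ⟨i', rfl⟩ <;>
      rcases Fin.eq_zero_or_eq_succ j with rfl | ⟨j', rfl⟩
    · exact absurd hij (lt_irrefl _)
    · simpa using key3 j'
    · exact absurd hij (Fin.not_lt_zero _)
    · simp only [Fin.cases_succ]
      exact key2 i' j' (Fin.succ_lt_succ_iff.mp hij)
  · intro i
    rcases Fin.eq_zero_or_eq_succ i with rfl | ⟨i', rfl⟩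
    · simpa using hc0.trans (hneg ⟨0, hn⟩)
    · simpa using key1 i'
  · intro i
    rcases Fin.eq_zero_or_eq_succ i with rfl | ⟨i', rfl⟩
    · simpa using hc0root
    · simpa using hc3 i'

lemma PB_has_roots {r : ℝ} (hr : 0 < r) : ∀ n : ℕ, 0 < n →
    ∃ F : Fin n → ℝ, StrictMono F ∧ (∀ i, F i < 0) ∧
      ∀ i, (PB r n).eval (F i) = 0 := by
  intro n
  induction n with
  | zero => omega
  | succ m ih =>
    intro _
    rcases Nat.eq_zero_or_pos m with rfl | hm
    · refine ⟨fun _ => -r, fun i j hij => absurd (Fin.lt_def.mp hij)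
        (by have := i.isLt; have := j.isLt; omega),
        fun _ => by show -r < 0; linarith, fun _ => ?_⟩
      simp [PB, Finset.sum_range_succ, stirSec]
    · obtain ⟨f, h1, h2, h3⟩ := ih hm
      obtain ⟨F, hF1, hF2, hF3⟩ :=
        step_lemma hr (PB r m) (PB_monic r m).ne_zero hm f h1 h2 h3
      refine ⟨F, hF1, hF2, fun i => ?_⟩
      rw [PB_succ]
      exact hF3 i


theorem stirSec_poly_roots_real_neg (r : ℝ) (hr : 0 < r) (n : ℕ) (hn : 1 ≤ n)
    (z : ℂ) (hz : ∑ j ∈ Finset.range (n + 1), ((stirSec r n j : ℝ) : ℂ) * z ^ j = 0) :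
    ∃ x : ℝ, x < 0 ∧ z = (x : ℂ) := by
  obtain ⟨f, hmono, hneg, hroot⟩ := PB_has_roots hr n hn
  set P : ℝ[X] := PB r n with hP
  set Q : ℂ[X] := P.map (algebraMap ℝ ℂ) with hQ
  have hQdeg : Q.natDegree = n := by
    rw [hQ, (PB_monic r n).natDegree_map, PB_natDegree]
  have hz' : Q.eval z = 0 := by
    rw [hQ, eval_map, Polynomial.eval₂_eq_sum_range, hP, PB_natDegree]
    rw [← hz]
    refine Finset.sum_congr rfl fun j _ => ?_
    rw [PB_coeff]
    norm_num
  by_contra hcon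
  push_neg at hcon
  set s : Finset ℂ := Finset.univ.image fun i : Fin n => ((f i : ℝ) : ℂ) with hs
  have hinj : Function.Injective fun i : Fin n => ((f i : ℝ) : ℂ) :=
    fun a b hab => hmono.injective (Complex.ofReal_injective hab)
  have hcard : s.card = n := by
    rw [hs, Finset.card_image_of_injective _ hinj, Finset.card_univ, Fintype.card_fin]
  have hzs : z ∉ s := by
    intro hzmem
    rw [hs, Finset.mem_image] at hzmem
    obtain ⟨i, _, hi⟩ := hzmem
    exact (hcon (f i) (hneg i)) hi.symm
  have htcard : (insert z s).card = n + 1 := by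
    rw [Finset.card_insert_of_notMem hzs, hcard]
  have hsub : (insert z s).val ⊆ Q.roots := by
    intro w hw
    have hQne : Q ≠ 0 := ((PB_monic r n).map _).ne_zero
    rw [Finset.insert_val, Multiset.mem_ndinsert] at hw
    rcases hw with rfl | hw
    · exact (Polynomial.mem_roots hQne).2 hz'
    · rw [hs] at hw
      simp only [Finset.image_val, Multiset.mem_dedup, Multiset.mem_map] at hw
      obtain ⟨i, _, rfl⟩ := hw
      refine (Polynomial.mem_roots hQne).2 ?_
      show Q.eval _ = 0
      rw [hQ, show ((f i : ℝ) : ℂ) = algebraMap ℝ ℂ (f i) from rfl, eval_map,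
        Polynomial.eval₂_at_apply, hroot i, map_zero]
  have := Polynomial.card_le_degree_of_subset_roots hsub
  omega
end
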